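/- Let v_1 ≥ v_2 ≥ ... ≥ v_n ≥ 0 be reals and 1 = i_1 < i_2 < ... < i_k ≤ n be indices, where k divides n. If i_{κ+1} ≤ (n/k)κ + 1 for every κ ∈ {1,...,k−1}, then Σ_{j=1}^k v_{i_j} ≥ (k/n) Σ_{i=1}^n v_i. -/
import Mathlib


/-- Let `v_1 ≥ ... ≥ v_n ≥ 0` and `1 = i_1 < i_2 < ... < i_k ≤ n` with
`k ∣ n`. If `i_{κ+1} ≤ (n/k)κ + 1` for every `κ ∈ {1,...,k−1}`, then
`Σ_{j=1}^k v_{i_j} ≥ (k/n) Σ_{i=1}^n v_i`. (Indices are 0-based in Lean: the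
`(κ+1)`-th selected index `i κ` satisfies `(i κ).val ≤ (n/k)·κ`.) -/
theorem stmt_7 (n k : ℕ) (hk : 0 < k) (hn : 0 < n) (hdvd : k ∣ n)
    (v : Fin n → ℝ) (hmono : Antitone v) (hnonneg : ∀ j, 0 ≤ v j)
    (i : Fin k → Fin n) (hstrict : StrictMono i)
    (h0 : (i ⟨0, hk⟩).val = 0)
    (hbound : ∀ κ : Fin k, 1 ≤ κ.val → (i κ).val ≤ (n / k) * κ.val) :
    (k : ℝ) / n * ∑ j, v j ≤ ∑ j, v (i j) := by
  obtain ⟨m, hm⟩ := hdvd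
  subst hm
  have hmpos : 0 < m := by
    rcases Nat.eq_zero_or_pos m with h | h
    · simp [h] at hn
    · exact h
  have hb : ∀ κ : Fin k, (i κ).val ≤ m * κ.val := by
    intro κ
    rcases Nat.eq_zero_or_pos κ.val with h | h
    · have hκ : κ = ⟨0, hk⟩ := Fin.ext h
      simp [hκ, h0]
    · have := hbound κ h
      rwa [Nat.mul_div_cancel_left m hk] at this
  have key : ∀ (κ : Fin k) (r : Fin m), v (finProdFinEquiv (κ, r)) ≤ v (i κ) := by
    intro κ r
    apply hmono
    rw [Fin.le_def]
    calc (i κ).val ≤ m * κ.val := hb κ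
      _ ≤ r.val + m * κ.val := Nat.le_add_left _ _
      _ = (finProdFinEquiv (κ, r)).val := rfl
  have hsum : ∑ j, v j ≤ (m : ℝ) * ∑ j, v (i j) := by
    rw [← Equiv.sum_comp finProdFinEquiv v, Fintype.sum_prod_type, Finset.mul_sum]
    apply Finset.sum_le_sum
    intro κ _
    calc ∑ r : Fin m, v (finProdFinEquiv (κ, r)) ≤ ∑ r : Fin m, v (i κ) :=
          Finset.sum_le_sum fun r _ => key κ r
      _ = (m : ℝ) * v (i κ) := by simp [Finset.sum_const, mul_comm]
  have hkm : (0:ℝ) < (k * m : ℕ) := by exact_mod_cast hn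
  rw [div_mul_eq_mul_div, div_le_iff₀ hkm]
  push_cast
  calc (k:ℝ) * ∑ j, v j ≤ (k : ℝ) * ((m : ℝ) * ∑ j, v (i j)) := by
        apply mul_le_mul_of_nonneg_left hsum (by positivity)
    _ = (∑ j, v (i j)) * ((k : ℝ) * (m : ℝ)) := by ring
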